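/- If a nondeterministic U(1)-covariant operation transforms the pure state |ψ⟩ = Σ_n ψ_n|n⟩ to the pure state |φ⟩ = Σ_n φ_n|n⟩ with success probability p, then for every positive integer k, p ≤ (Σ_n |ψ_{n+k}||ψ_n|) / (Σ_n |φ_{n+k}||φ_n|), whenever the denominator is nonzero. -/

import Mathlib

open Complex Matrix MeasureTheory
open scoped ComplexOrder

/-- The unitary representation of U(1) on a finite-dimensional Hilbert space with
orthonormal basis indexed by `ι`, where basis vector `i` carries integer charge `c i`:
`U(θ) = Σ_n e^{inθ} Π_n`. -/
noncomputable def Urep {ι : Type*} [Fintype ι] [DecidableEq ι] (c : ι → ℤ) (θ : ℝ) :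
    Matrix ι ι ℂ :=
  Matrix.diagonal fun i => Complex.exp (Complex.I * (c i : ℂ) * (θ : ℂ))

/-- The mode-`k` component of an operator: `A^(k) = Σ_n Π_{n+k} A Π_n`. -/
def modeComp {ι : Type*} [Fintype ι] [DecidableEq ι] (c : ι → ℤ) (k : ℤ)
    (A : Matrix ι ι ℂ) : Matrix ι ι ℂ :=
  Matrix.of fun i j => if c i - c j = k then A i j else 0

/-- The trace norm `‖A‖₁ = tr √(A†A)`. -/
noncomputable def traceNorm {ι : Type*} [Fintype ι] [DecidableEq ι]
    (A : Matrix ι ι ℂ) : ℝ :=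
  (((Matrix.posSemidef_conjTranspose_mul_self A).1.eigenvectorUnitary.1 *
      Matrix.diagonal (((↑) : ℝ → ℂ) ∘ (√·) ∘ (Matrix.posSemidef_conjTranspose_mul_self A).1.eigenvalues) *
      (star (Matrix.posSemidef_conjTranspose_mul_self A).1.eigenvectorUnitary : Matrix ι ι ℂ)).trace).re

/-- The Choi matrix of a linear superoperator. -/
noncomputable def choi {ι κ : Type*} [Fintype ι] [DecidableEq ι] [Fintype κ]
    (E : Matrix ι ι ℂ →ₗ[ℂ] Matrix κ κ ℂ) : Matrix (ι × κ) (ι × κ) ℂ :=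
  Matrix.of fun p q => E (Matrix.single p.1 q.1 1) p.2 q.2

/-- A quantum channel: completely positive (positive semidefinite Choi matrix)
and trace preserving. -/
def IsCPTP {ι κ : Type*} [Fintype ι] [DecidableEq ι] [Fintype κ]
    (E : Matrix ι ι ℂ →ₗ[ℂ] Matrix κ κ ℂ) : Prop :=
  (choi E).PosSemidef ∧ ∀ A : Matrix ι ι ℂ, (E A).trace = A.trace

/-- U(1)-covariance of a superoperator with respect to input charges `c`
and output charges `d`. -/
def IsCovariant {ι κ : Type*} [Fintype ι] [DecidableEq ι] [Fintype κ] [DecidableEq κ]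
    (c : ι → ℤ) (d : κ → ℤ) (E : Matrix ι ι ℂ →ₗ[ℂ] Matrix κ κ ℂ) : Prop :=
  ∀ (θ : ℝ) (X : Matrix ι ι ℂ),
    E (Urep c θ * X * (Urep c θ)ᴴ) = Urep d θ * E X * (Urep d θ)ᴴ

/-- A density operator (quantum state). -/
def IsDensity {ι : Type*} [Fintype ι] (ρ : Matrix ι ι ℂ) : Prop :=
  ρ.PosSemidef ∧ ρ.trace = 1


section helpers
variable {κ : Type*} [Fintype κ] [DecidableEq κ]

lemma diag_re_nonneg {M : Matrix κ κ ℂ} (h : M.PosSemidef) (p : κ) : 0 ≤ (M p p).re := by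
  have := h.re_dotProduct_nonneg (Pi.single p 1)
  simpa [dotProduct, mulVec, Pi.single_apply, Finset.sum_ite_eq, Finset.sum_ite_eq'] using this

lemma diag_im_zero {M : Matrix κ κ ℂ} (h : M.PosSemidef) (p : κ) : (M p p).im = 0 := by
  have := congrFun (congrFun h.1 p) p
  simp only [conjTranspose_apply] at this
  exact Complex.conj_eq_iff_im.mp this

lemma psd_sq_abs_le {M : Matrix κ κ ℂ} (h : M.PosSemidef) (p q : κ) :
    ‖M p q‖ ^ 2 ≤ (M p p).re * (M q q).re := by
  set α := (M p p).re with hα'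
  set β := (M q q).re with hβ'
  set z := M p q with hz
  set r2 := ‖z‖ ^ 2 with hr2
  have hα : 0 ≤ α := diag_re_nonneg h p
  have hβ : 0 ≤ β := diag_re_nonneg h q
  have hr2nn : 0 ≤ r2 := sq_nonneg _
  have hqp : M q p = starRingEnd ℂ z := by
    have := congrFun (congrFun h.1 q) p
    simp only [conjTranspose_apply] at this
    rw [← this]; simp [hz]
  have himp : (M p p).im = 0 := diag_im_zero h p
  have himq : (M q q).im = 0 := diag_im_zero h q
  have e1 : (starRingEnd ℂ) z * z = (r2 : ℂ) := by
    rw [hr2, ← Complex.normSq_eq_norm_sq]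
    simp [Complex.normSq_eq_conj_mul_self]
  have key : ∀ t : ℝ, 0 ≤ (α * r2) * (t * t) + (-2 * r2) * t + β := by
    intro t
    have h2 := (h.submatrix ![p,q]).re_dotProduct_nonneg ![(t : ℂ) * z, -1]
    have e2 : dotProduct (star ![(t : ℂ) * z, -1])
          ((M.submatrix ![p,q] ![p,q]) *ᵥ ![(t : ℂ) * z, -1])
        = ((t:ℂ) * t * r2) * M p p - 2 * t * r2 + M q q := by
      simp only [dotProduct, mulVec, Fin.sum_univ_two, Pi.star_apply,
        Matrix.cons_val_zero, Matrix.cons_val_one, Matrix.head_cons,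
        Matrix.submatrix_apply, star_mul', star_neg, star_one, Complex.star_def,
        _root_.map_mul, map_neg, _root_.map_one, Complex.conj_ofReal]
      rw [hqp, ← hz]
      linear_combination ((t:ℂ) * (t:ℂ) * M p p - 2 * (t:ℂ)) * e1
    rw [e2] at h2
    simp only [RCLike.re_to_complex] at h2
    have : (((t:ℂ) * t * r2) * M p p - 2 * t * r2 + M q q).re
        = (α * r2) * (t * t) + (-2 * r2) * t + β := by
      simp [Complex.add_re, Complex.sub_re, Complex.mul_re, himp, himq, hα', hβ']
      ring
    rw [this] at h2
    exact h2
  have hd := discrim_le_zero key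
  rw [discrim] at hd
  rcases eq_or_lt_of_le hr2nn with h0 | hpos
  · rw [← h0]; exact mul_nonneg hα hβ
  · have h4 : r2 * r2 ≤ (α * β) * r2 := by nlinarith
    exact le_of_mul_le_mul_right h4 hpos

/-- phase of `φ s * conj (φ t)` -/
noncomputable def ph (φ : κ → ℂ) (s t : κ) : ℂ :=
  if φ s * (starRingEnd ℂ) (φ t) = 0 then 1
  else (φ s * (starRingEnd ℂ) (φ t)) / (‖φ s * (starRingEnd ℂ) (φ t)‖ : ℂ)

lemma ph_abs_le (φ : κ → ℂ) (s t : κ) : ‖ph φ s t‖ ≤ 1 := by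
  unfold ph
  split_ifs with h
  · simp
  · rw [norm_div, Complex.norm_real, norm_norm, div_self]
    exact (norm_ne_zero_iff.mpr h)

lemma ph_mul (φ : κ → ℂ) (s t : κ) :
    (starRingEnd ℂ) (ph φ s t) * (φ s * (starRingEnd ℂ) (φ t))
      = ((‖φ s‖ * ‖φ t‖ : ℝ) : ℂ) := by
  unfold ph
  set z := φ s * (starRingEnd ℂ) (φ t) with hz
  have habs : ‖z‖ = ‖φ s‖ * ‖φ t‖ := by
    rw [hz, norm_mul, Complex.norm_conj]
  split_ifs with h
  · simp [h, ← habs]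
  · rw [map_div₀]
    have hcr : (starRingEnd ℂ) ((‖z‖ : ℝ) : ℂ) = ((‖z‖ : ℝ) : ℂ) := by simp
    rw [hcr, div_mul_eq_mul_div, ← Complex.normSq_eq_conj_mul_self, Complex.normSq_eq_norm_sq, ← habs]
    have hne : ((‖z‖ : ℝ) : ℂ) ≠ 0 := by simpa using norm_ne_zero_iff.mpr h
    field_simp
    norm_cast

/-- The `W` matrix used to pair against outputs. -/
noncomputable def Wmat (φ : κ → ℂ) (d : κ → ℤ) (k : ℤ) :
    Matrix (κ × Fin 2) (κ × Fin 2) ℂ :=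
  Matrix.of fun u v =>
    if u.2 = 0 ∧ v.2 = 0 ∧ d u.1 - d v.1 = k then ph φ u.1 v.1 else 0

/-- The pairing functional `T A = Σ conj (W u v) * A u v` as a linear map. -/
noncomputable def Tfun (φ : κ → ℂ) (d : κ → ℤ) (k : ℤ) :
    Matrix (κ × Fin 2) (κ × Fin 2) ℂ →ₗ[ℂ] ℂ where
  toFun A := ∑ u, ∑ v, (starRingEnd ℂ) (Wmat φ d k u v) * A u v
  map_add' A B := by
    simp [Matrix.add_apply, mul_add, Finset.sum_add_distrib]
  map_smul' r A := by
    simp [Matrix.smul_apply, smul_eq_mul, Finset.mul_sum, mul_left_comm]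

lemma T_apply (φ : κ → ℂ) (d : κ → ℤ) (k : ℤ) (A : Matrix (κ × Fin 2) (κ × Fin 2) ℂ) :
    Tfun φ d k A = ∑ u, ∑ v, (starRingEnd ℂ) (Wmat φ d k u v) * A u v := rfl

open Kronecker in
lemma T_kron_phi (φ : κ → ℂ) (d : κ → ℤ) (k : ℤ) :
    Tfun φ d k (Matrix.vecMulVec φ (star φ) ⊗ₖ
        Matrix.single (0 : Fin 2) (0 : Fin 2) (1:ℂ))
      = (((∑ s : κ, ∑ t : κ,
          if d s - d t = k then ‖φ s‖ * ‖φ t‖ else 0) : ℝ) : ℂ) := by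
  rw [T_apply, Fintype.sum_prod_type]
  have step : ∀ s : κ, (∑ a : Fin 2, ∑ v : κ × Fin 2,
      (starRingEnd ℂ) (Wmat φ d k (s, a) v) *
      (Matrix.vecMulVec φ (star φ) ⊗ₖ
        Matrix.single (0 : Fin 2) (0 : Fin 2) (1:ℂ)) (s, a) v)
      = ∑ t : κ, if d s - d t = k
          then ((‖φ s‖ * ‖φ t‖ : ℝ) : ℂ) else 0 := by
    intro s
    rw [Fin.sum_univ_two]
    have h1 : (∑ v : κ × Fin 2, (starRingEnd ℂ) (Wmat φ d k (s, 1) v) *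
        (Matrix.vecMulVec φ (star φ) ⊗ₖ
          Matrix.single (0 : Fin 2) (0 : Fin 2) (1:ℂ)) (s, 1) v) = 0 :=
      Finset.sum_eq_zero fun v _ => by simp [Wmat]
    rw [h1, add_zero, Fintype.sum_prod_type]
    refine Finset.sum_congr rfl fun t _ => ?_
    rw [Fin.sum_univ_two]
    have h2 : (starRingEnd ℂ) (Wmat φ d k (s, 0) (t, 1)) *
        (Matrix.vecMulVec φ (star φ) ⊗ₖ
          Matrix.single (0 : Fin 2) (0 : Fin 2) (1:ℂ)) (s, 0) (t, 1) = 0 := by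
      simp [Wmat]
    rw [h2, add_zero]
    simp only [Wmat, Matrix.of_apply, Matrix.kroneckerMap_apply, Matrix.vecMulVec_apply,
      Pi.star_apply, Complex.star_def, Matrix.single_apply_same, mul_one]
    simp only [and_true, true_and, eq_self_iff_true, if_true]
    split_ifs with h
    · exact ph_mul φ s t
    · simp
  refine (Finset.sum_congr rfl fun s _ => step s).trans ?_
  rw [Complex.ofReal_sum]
  refine Finset.sum_congr rfl fun s _ => ?_
  rw [Complex.ofReal_sum]
  refine Finset.sum_congr rfl fun t _ => ?_
  split_ifs with h <;> simp

open Kronecker in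
lemma T_kron_tau (φ : κ → ℂ) (d : κ → ℤ) (k : ℤ) (τ : Matrix κ κ ℂ) :
    Tfun φ d k (τ ⊗ₖ Matrix.single (1 : Fin 2) (1 : Fin 2) (1:ℂ)) = 0 := by
  rw [T_apply]
  refine Finset.sum_eq_zero fun u _ => Finset.sum_eq_zero fun v _ => ?_
  rcases u with ⟨s, a⟩; rcases v with ⟨t, b⟩
  by_cases ha : a = 0
  · subst ha
    simp [Matrix.kroneckerMap_apply, Matrix.single_apply_of_ne]
  · have ha' : a = 1 := by fin_cases a <;> simp_all
    subst ha'
    simp [Wmat]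

lemma T_U_conj (φ : κ → ℂ) (d : κ → ℤ) (k : ℤ) (θ : ℝ)
    (A : Matrix (κ × Fin 2) (κ × Fin 2) ℂ) :
    Tfun φ d k (Urep (fun q : κ × Fin 2 => d q.1) θ * A *
        (Urep (fun q : κ × Fin 2 => d q.1) θ)ᴴ)
      = Complex.exp (Complex.I * (k:ℂ) * (θ:ℂ)) * Tfun φ d k A := by
  rw [T_apply, T_apply, Finset.mul_sum]
  refine Finset.sum_congr rfl fun u _ => ?_
  rw [Finset.mul_sum]
  refine Finset.sum_congr rfl fun v _ => ?_
  by_cases h : u.2 = (0:Fin 2) ∧ v.2 = 0 ∧ d u.1 - d v.1 = k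
  · have hdk := h.2.2
    simp only [Urep, Matrix.diagonal_conjTranspose, Matrix.mul_diagonal,
      Matrix.diagonal_mul, Wmat, Matrix.of_apply, if_pos h, Pi.star_apply, Complex.star_def]
    have hstar : (starRingEnd ℂ) (Complex.exp (Complex.I * (d v.1 : ℂ) * θ))
        = Complex.exp (-(Complex.I * (d v.1:ℂ) * θ)) := by
      rw [← Complex.exp_conj]; congr 1; simp
    rw [hstar]
    have hdc : ((d u.1 : ℂ) - (d v.1 : ℂ)) = (k:ℂ) := by exact_mod_cast hdk
    have hee : Complex.exp (Complex.I * (d u.1:ℂ)*θ) * Complex.exp (-(Complex.I*(d v.1:ℂ)*θ))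
        = Complex.exp (Complex.I*(k:ℂ)*θ) := by
      rw [← Complex.exp_add]; congr 1
      linear_combination Complex.I * (θ:ℂ) * hdc
    linear_combination ((starRingEnd ℂ) (ph φ u.1 v.1) * A u v) * hee
  · simp only [Wmat, Matrix.of_apply, if_neg h]; simp

lemma abs_T_le (φ : κ → ℂ) {d : κ → ℤ} (hd : Function.Injective d) (k : ℤ)
    (A : Matrix (κ × Fin 2) (κ × Fin 2) ℂ) (a b : κ × Fin 2 → ℝ)
    (ha : ∀ u, 0 ≤ a u) (hb : ∀ v, 0 ≤ b v)
    (hab : ∀ u v, ‖A u v‖ ^ 2 ≤ a u * b v)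
    (ha1 : ∑ u, a u ≤ 1) (hb1 : ∑ v, b v ≤ 1) :
    ‖Tfun φ d k A‖ ≤ 1 := by
  classical
  set P : (κ × Fin 2) × (κ × Fin 2) → Prop :=
    fun x => x.1.2 = 0 ∧ x.2.2 = 0 ∧ d x.1.1 - d x.2.1 = k with hP
  set F : Finset ((κ × Fin 2) × (κ × Fin 2)) := Finset.univ.filter P with hF
  have h1 : ‖Tfun φ d k A‖
      ≤ ∑ x ∈ F, Real.sqrt (a x.1) * Real.sqrt (b x.2) := by
    calc ‖Tfun φ d k A‖
        ≤ ∑ u, ∑ v, ‖(starRingEnd ℂ) (Wmat φ d k u v) * A u v‖ := by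
          rw [T_apply]
          refine (norm_sum_le _ _).trans (Finset.sum_le_sum fun u _ => norm_sum_le _ _)
      _ = ∑ x : (κ × Fin 2) × (κ × Fin 2),
            ‖(starRingEnd ℂ) (Wmat φ d k x.1 x.2) * A x.1 x.2‖ := by
          rw [← Finset.sum_product', Finset.univ_product_univ]
      _ ≤ ∑ x : (κ × Fin 2) × (κ × Fin 2),
            (if P x then Real.sqrt (a x.1) * Real.sqrt (b x.2) else 0) := by
          refine Finset.sum_le_sum fun x _ => ?_
          by_cases hx : P x
          · rw [if_pos hx]
            have hW : ‖(starRingEnd ℂ) (Wmat φ d k x.1 x.2)‖ ≤ 1 := by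
              rw [Complex.norm_conj]
              simp only [Wmat, Matrix.of_apply, hP] at hx ⊢
              rw [if_pos hx]
              exact ph_abs_le φ _ _
            have hA : ‖A x.1 x.2‖ ≤ Real.sqrt (a x.1) * Real.sqrt (b x.2) := by
              rw [← Real.sqrt_mul (ha x.1)]
              exact (Real.le_sqrt (norm_nonneg _) (mul_nonneg (ha x.1) (hb x.2))).mpr (hab x.1 x.2)
            rw [norm_mul]
            calc ‖(starRingEnd ℂ) (Wmat φ d k x.1 x.2)‖ * ‖A x.1 x.2‖
                ≤ 1 * (Real.sqrt (a x.1) * Real.sqrt (b x.2)) := by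
                  exact mul_le_mul hW hA (norm_nonneg _) zero_le_one
              _ = _ := one_mul _
          · rw [if_neg hx]
            have hW0 : Wmat φ d k x.1 x.2 = 0 := by
              simp only [Wmat, Matrix.of_apply, hP] at hx ⊢
              rw [if_neg hx]
            rw [hW0]
            simp
      _ = ∑ x ∈ F, Real.sqrt (a x.1) * Real.sqrt (b x.2) := by
          rw [hF, Finset.sum_filter]
  have hsqnonneg : (0:ℝ) ≤ ∑ x ∈ F, Real.sqrt (a x.1) * Real.sqrt (b x.2) :=
    Finset.sum_nonneg fun x _ => mul_nonneg (Real.sqrt_nonneg _) (Real.sqrt_nonneg _)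
  have h2 : (∑ x ∈ F, Real.sqrt (a x.1) * Real.sqrt (b x.2)) ^ 2
      ≤ (∑ x ∈ F, a x.1) * (∑ x ∈ F, b x.2) := by
    have hcs := Finset.sum_mul_sq_le_sq_mul_sq F
      (fun x => Real.sqrt (a x.1)) (fun x => Real.sqrt (b x.2))
    have e1 : ∑ x ∈ F, (Real.sqrt (a x.1)) ^ 2 = ∑ x ∈ F, a x.1 :=
      Finset.sum_congr rfl fun x _ => Real.sq_sqrt (ha x.1)
    have e2 : ∑ x ∈ F, (Real.sqrt (b x.2)) ^ 2 = ∑ x ∈ F, b x.2 :=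
      Finset.sum_congr rfl fun x _ => Real.sq_sqrt (hb x.2)
    rw [e1, e2] at hcs
    exact hcs
  have hFa : ∑ x ∈ F, a x.1 ≤ 1 := by
    have hinj : ∀ x ∈ F, ∀ y ∈ F, x.1 = y.1 → x = y := by
      intro x hx y hy hxy
      simp only [hF, Finset.mem_filter, hP] at hx hy
      have h2a : d x.2.1 = d y.2.1 := by
        have := hx.2.2.2
        have := hy.2.2.2
        rw [hxy] at *
        omega
      have : x.2 = y.2 := Prod.ext (hd h2a) (hx.2.2.1.trans hy.2.2.1.symm)
      exact Prod.ext hxy this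
    calc ∑ x ∈ F, a x.1 = ∑ u ∈ F.image Prod.fst, a u := (Finset.sum_image hinj).symm
      _ ≤ ∑ u, a u := Finset.sum_le_sum_of_subset_of_nonneg (Finset.subset_univ _)
          (fun u _ _ => ha u)
      _ ≤ 1 := ha1
  have hFb : ∑ x ∈ F, b x.2 ≤ 1 := by
    have hinj : ∀ x ∈ F, ∀ y ∈ F, x.2 = y.2 → x = y := by
      intro x hx y hy hxy
      simp only [hF, Finset.mem_filter, hP] at hx hy
      have h2a : d x.1.1 = d y.1.1 := by
        have := hx.2.2.2
        have := hy.2.2.2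
        rw [hxy] at *
        omega
      have : x.1 = y.1 := Prod.ext (hd h2a) (hx.2.1.trans hy.2.1.symm)
      exact Prod.ext this hxy
    calc ∑ x ∈ F, b x.2 = ∑ v ∈ F.image Prod.snd, b v := (Finset.sum_image hinj).symm
      _ ≤ ∑ v, b v := Finset.sum_le_sum_of_subset_of_nonneg (Finset.subset_univ _)
          (fun v _ _ => hb v)
      _ ≤ 1 := hb1
  have hFanonneg : 0 ≤ ∑ x ∈ F, a x.1 := Finset.sum_nonneg fun x _ => ha x.1
  refine h1.trans ?_
  nlinarith
end helpers

open Kronecker in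
/-- if a nondeterministic U(1)-covariant operation (modeled as a
covariant channel with a U(1)-invariant success/failure flag) transforms the pure
state `|ψ⟩` into the pure state `|φ⟩` with success probability p, then for every
positive integer k,
`p ≤ (Σ_n |ψ_{n+k}||ψ_n|) / (Σ_n |φ_{n+k}||φ_n|)` whenever the denominator is
nonzero. -/
theorem stmt_16 {ι κ : Type*} [Fintype ι] [DecidableEq ι] [Fintype κ] [DecidableEq κ]
    (c : ι → ℤ) (hc : Function.Injective c)
    (d : κ → ℤ) (hd : Function.Injective d)
    (E : Matrix ι ι ℂ →ₗ[ℂ] Matrix (κ × Fin 2) (κ × Fin 2) ℂ)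
    (hCPTP : IsCPTP E)
    (hcov : IsCovariant c (fun q : κ × Fin 2 => d q.1) E)
    (ψ : ι → ℂ) (hψ : ∑ i : ι, ‖ψ i‖ ^ 2 = 1)
    (φ : κ → ℂ) (hφ : ∑ i : κ, ‖φ i‖ ^ 2 = 1)
    (τ : Matrix κ κ ℂ) (hτ : IsDensity τ)
    (hτinv : ∀ θ : ℝ, Urep d θ * τ * (Urep d θ)ᴴ = τ)
    (p : ℝ) (hp0 : 0 ≤ p) (hp1 : p ≤ 1)
    (hE : E (Matrix.vecMulVec ψ (star ψ))
        = (p : ℂ) • (Matrix.vecMulVec φ (star φ) ⊗ₖ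
              Matrix.single (0 : Fin 2) (0 : Fin 2) (1:ℂ))
          + ((1 - p : ℝ) : ℂ) •
              (τ ⊗ₖ Matrix.single (1 : Fin 2) (1 : Fin 2) (1:ℂ)))
    (k : ℤ) (hk : 0 < k)
    (hden : (∑ i : κ, ∑ j : κ,
        if d i - d j = k then ‖φ i‖ * ‖φ j‖ else 0) ≠ 0) :
    p ≤ (∑ i : ι, ∑ j : ι,
          if c i - c j = k then ‖ψ i‖ * ‖ψ j‖ else 0)
        / (∑ i : κ, ∑ j : κ,
          if d i - d j = k then ‖φ i‖ * ‖φ j‖ else 0) := by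
  classical
  set D : ℝ := (∑ i : κ, ∑ j : κ,
      if d i - d j = k then ‖φ i‖ * ‖φ j‖ else 0) with hDdef
  set N : ℝ := (∑ i : ι, ∑ j : ι,
      if c i - c j = k then ‖ψ i‖ * ‖ψ j‖ else 0) with hNdef
  have hD0 : 0 ≤ D := by
    rw [hDdef]
    refine Finset.sum_nonneg fun i _ => Finset.sum_nonneg fun j _ => ?_
    split_ifs
    · positivity
    · exact le_refl 0
  have hDpos : 0 < D := lt_of_le_of_ne hD0 (Ne.symm hden)
  have hstep1 : Tfun φ d k (E (Matrix.vecMulVec ψ (star ψ)))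
      = ∑ i : ι, ∑ j : ι, (ψ i * (starRingEnd ℂ) (ψ j)) *
          Tfun φ d k (E (Matrix.single i j 1)) := by
    have hdecomp : Matrix.vecMulVec ψ (star ψ)
        = ∑ i : ι, ∑ j : ι, (ψ i * (starRingEnd ℂ) (ψ j)) • Matrix.single i j (1:ℂ) := by
      ext a b
      simp [Matrix.sum_apply, Matrix.vecMulVec_apply, Matrix.single,
        Matrix.smul_apply, mul_ite, ite_and, mul_zero, mul_one, Finset.sum_ite_eq,
        Finset.sum_ite_eq', Pi.star_apply, Complex.star_def]
    rw [hdecomp]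
    simp only [map_sum, _root_.map_smul, smul_eq_mul]
  have hstep2 : Tfun φ d k (E (Matrix.vecMulVec ψ (star ψ))) = ((p * D : ℝ) : ℂ) := by
    rw [hE, map_add, _root_.map_smul, _root_.map_smul, T_kron_phi, T_kron_tau, ← hDdef]
    simp only [smul_eq_mul, mul_zero, add_zero]
    push_cast
    ring
  have hone : ∀ i : ι, ∑ u : κ × Fin 2, (choi E (i,u) (i,u)).re = 1 := by
    intro i
    have h2 : (E (Matrix.single i i 1)).trace = 1 := by
      rw [hCPTP.2]
      simp [Matrix.trace, Matrix.diag, Matrix.single, Finset.sum_ite_eq]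
    have h3 : (E (Matrix.single i i 1)).trace
        = ∑ u : κ × Fin 2, choi E (i,u) (i,u) := rfl
    rw [h3] at h2
    calc ∑ u : κ × Fin 2, (choi E (i,u) (i,u)).re
        = (∑ u : κ × Fin 2, choi E (i,u) (i,u)).re := (Complex.re_sum _ _).symm
      _ = (1:ℂ).re := by rw [h2]
      _ = 1 := Complex.one_re
  have habs : ∀ i j : ι,
      ‖Tfun φ d k (E (Matrix.single i j 1))‖ ≤ 1 := by
    intro i j
    refine abs_T_le φ hd k (E (Matrix.single i j 1))
      (fun u => (choi E (i,u) (i,u)).re) (fun v => (choi E (j,v) (j,v)).re)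
      (fun u => diag_re_nonneg hCPTP.1 _) (fun v => diag_re_nonneg hCPTP.1 _)
      (fun u v => psd_sq_abs_le hCPTP.1 (i,u) (j,v))
      (le_of_eq (hone i)) (le_of_eq (hone j))
  have hzero : ∀ i j : ι, c i - c j ≠ k →
      Tfun φ d k (E (Matrix.single i j 1)) = 0 := by
    intro i j hne
    set t : ℤ := c i - c j - k with htdef
    have htZ : t ≠ 0 := sub_ne_zero.mpr hne
    have ht : (t : ℝ) ≠ 0 := Int.cast_ne_zero.mpr htZ
    have htC : ((t : ℤ) : ℂ) ≠ 0 := Int.cast_ne_zero.mpr htZ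
    set θ0 : ℝ := Real.pi / (t : ℝ) with hθ0
    have hU : Urep c θ0 * Matrix.single i j 1 * (Urep c θ0)ᴴ
        = Complex.exp (Complex.I * ((c i - c j : ℤ) : ℂ) * (θ0 : ℂ)) •
            Matrix.single i j (1:ℂ) := by
      ext a b
      simp only [Urep, Matrix.diagonal_conjTranspose, Matrix.mul_diagonal, Matrix.diagonal_mul,
        Matrix.smul_apply, Pi.star_apply, Complex.star_def, smul_eq_mul]
      by_cases hab : i = a ∧ j = b
      · obtain ⟨rfl, rfl⟩ := hab
        rw [Matrix.single_apply_same]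
        have hstar : (starRingEnd ℂ) (Complex.exp (Complex.I * (c j : ℂ) * θ0))
            = Complex.exp (-(Complex.I * (c j : ℂ) * θ0)) := by
          rw [← Complex.exp_conj]; congr 1; simp
        rw [hstar, mul_one, mul_one, ← Complex.exp_add]
        congr 1
        push_cast
        ring
      · simp only [Matrix.single, Matrix.of_apply, if_neg hab, mul_zero, zero_mul]
    have hcov' := hcov θ0 (Matrix.single i j 1)
    rw [hU, _root_.map_smul] at hcov'
    have hTeq := congrArg (fun X => Tfun φ d k X) hcov'
    simp only [_root_.map_smul, smul_eq_mul] at hTeq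
    rw [T_U_conj] at hTeq
    have hsplit : Complex.exp (Complex.I * ((c i - c j : ℤ) : ℂ) * (θ0:ℂ))
        = - Complex.exp (Complex.I * (k:ℂ) * (θ0:ℂ)) := by
      have h3 : ((t : ℤ) : ℂ) * ((θ0 : ℝ) : ℂ) = (Real.pi : ℂ) := by
        rw [hθ0]
        push_cast
        field_simp
      have h4 : Complex.I * ((c i - c j : ℤ) : ℂ) * (θ0:ℂ)
          = Complex.I * (k:ℂ) * (θ0:ℂ) + (Real.pi : ℂ) * Complex.I := by
        have h5 : ((c i - c j : ℤ) : ℂ) = (k:ℂ) + ((t : ℤ) : ℂ) := by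
          rw [htdef]; push_cast; ring
        rw [h5]
        linear_combination Complex.I * h3
      rw [h4, Complex.exp_add, Complex.exp_pi_mul_I]
      ring
    rw [hsplit] at hTeq
    have h6 : Complex.exp (Complex.I * (k:ℂ) * (θ0:ℂ))
        * (2 * Tfun φ d k (E (Matrix.single i j 1))) = 0 := by
      linear_combination (-1 : ℂ) * hTeq
    rcases mul_eq_zero.mp h6 with h7 | h7
    · exact absurd h7 (Complex.exp_ne_zero _)
    · exact (mul_eq_zero.mp h7).resolve_left two_ne_zero
  have hkey : p * D ≤ N := by
    have h1 : ((p * D : ℝ) : ℂ) = ∑ i : ι, ∑ j : ι, (ψ i * (starRingEnd ℂ) (ψ j)) *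
        Tfun φ d k (E (Matrix.single i j 1)) := hstep2.symm.trans hstep1
    have h2 : p * D = ‖((p * D : ℝ) : ℂ)‖ := by
      rw [Complex.norm_real, Real.norm_eq_abs, _root_.abs_of_nonneg (mul_nonneg hp0 hD0)]
    rw [h2, h1]
    calc ‖∑ i : ι, ∑ j : ι, (ψ i * (starRingEnd ℂ) (ψ j)) *
          Tfun φ d k (E (Matrix.single i j 1))‖
        ≤ ∑ i : ι, ∑ j : ι, ‖(ψ i * (starRingEnd ℂ) (ψ j)) *
          Tfun φ d k (E (Matrix.single i j 1))‖ :=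
          (norm_sum_le _ _).trans
            (Finset.sum_le_sum fun i _ => norm_sum_le _ _)
      _ ≤ N := by
          rw [hNdef]
          refine Finset.sum_le_sum fun i _ => Finset.sum_le_sum fun j _ => ?_
          by_cases hcc : c i - c j = k
          · rw [if_pos hcc, norm_mul, norm_mul, Complex.norm_conj]
            calc ‖ψ i‖ * ‖ψ j‖ *
                  ‖Tfun φ d k (E (Matrix.single i j 1))‖
                ≤ ‖ψ i‖ * ‖ψ j‖ * 1 := by
                  refine mul_le_mul_of_nonneg_left (habs i j) ?_
                  positivity
              _ = ‖ψ i‖ * ‖ψ j‖ := mul_one _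
          · rw [if_neg hcc, hzero i j hcc]
            simp
  rw [le_div_iff₀ hDpos]
  exact hkey
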